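/- arXiv:1306.2715 — 3 statements merged into one kernel-verified Lean document; each statement's English description precedes it below -/
import Mathlib

section
/- Let φ be a real number in [0,1) with binary expansion φ = 0.x₁x₂…x_{n+2}, and for k = 1,…,n let β_k be a real number with |2^(k-1)φ - β_k| mod 1 < 1/8. Define bits x̂_{n}, x̂_{n+1}, x̂_{n+2} from β_n and iteratively for k = n-1,…,1 set x̂_k = 0 if |0.0x̂_{k+1}x̂_{k+2} - β_k| mod 1 < 1/4 and x̂_k = 1 if |0.1x̂_{k+1}x̂_{k+2} - β_k| mod 1 < 1/4. Then |0.x̂₁x̂₂…x̂_{n+2} - φ| mod 1 < 2^{-(n+2)}. -/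
/-- Distance from a real number to the nearest integer. -/
noncomputable def distMod1 (z : ℝ) : ℝ := |z - round z|

lemma dm1_le_abs (z : ℝ) : distMod1 z ≤ |z| := by
  unfold distMod1
  simpa using round_le z 0

lemma dm1_add_int (z : ℝ) (m : ℤ) : distMod1 (z + m) = distMod1 z := by
  unfold distMod1
  rw [round_add_intCast]
  push_cast
  ring_nf

lemma dm1_neg (z : ℝ) : distMod1 (-z) = distMod1 z := by
  have h1 : ∀ w : ℝ, distMod1 (-w) ≤ distMod1 w := by
    intro w
    have := round_le (-w) (-round w)
    unfold distMod1
    calc |(-w) - round (-w)| ≤ |(-w) - ((-round w : ℤ) : ℝ)| := this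
      _ = |w - round w| := by push_cast; rw [← abs_neg]; ring_nf
  refine le_antisymm (h1 z) ?_
  have := h1 (-z)
  simpa using this

lemma dm1_triangle (a b : ℝ) : distMod1 (a + b) ≤ distMod1 a + distMod1 b := by
  unfold distMod1
  calc |a + b - round (a + b)| ≤ |a + b - ((round a + round b : ℤ) : ℝ)| := round_le _ _
    _ = |(a - round a) + (b - round b)| := by push_cast; ring_nf
    _ ≤ |a - round a| + |b - round b| := abs_add_le _ _

lemma half_le_abs_int (r : ℤ) : (1:ℝ)/2 ≤ |1/2 - (r:ℝ)| := by
  rcases le_or_gt r 0 with h | h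
  · have : (r:ℝ) ≤ 0 := by exact_mod_cast h
    rw [abs_of_nonneg (by linarith)]; linarith
  · have : (1:ℝ) ≤ r := by exact_mod_cast h
    rw [abs_of_nonpos (by linarith)]; linarith

lemma dm1_half_lower (m : ℤ) (t : ℝ) : 1/2 - |t| ≤ distMod1 ((m:ℝ) + 1/2 + t) := by
  have h := dm1_add_int (1/2 + t) m
  have heq : (m:ℝ) + 1/2 + t = 1/2 + t + m := by ring
  rw [heq, h]
  unfold distMod1
  have h2 := half_le_abs_int (round (1/2 + t))
  have h3 : |1/2 - (round (1/2+t) : ℝ)| - |t| ≤ |1/2 + t - round (1/2 + t)| := by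
    have := abs_sub_abs_le_abs_sub (1/2 - (round (1/2+t):ℝ)) (-t)
    have he : 1/2 - (round (1/2+t):ℝ) - (-t) = 1/2 + t - round (1/2+t) := by ring
    rw [he] at this
    simpa using this
  linarith

lemma geo_sum (a : ℕ) : ∀ b : ℕ, a ≤ b + 1 →
    ∑ i ∈ Finset.Icc a b, (2:ℝ)^(-(i:ℤ)) = 2^(1-(a:ℤ)) - 2^(-(b:ℤ)) := by
  intro b
  induction b with
  | zero =>
    intro h
    interval_cases a
    · norm_num
    · norm_num
  | succ b ih =>
    intro h
    rcases Nat.lt_or_ge a (b+2) with h' | h'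
    · have ha : a ≤ b + 1 := by omega
      rw [Finset.sum_Icc_succ_top ha, ih ha]
      have hc : (-((b+1:ℕ):ℤ)) = -(b:ℤ) - 1 := by push_cast; ring
      rw [hc]
      have h2 : (2:ℝ)^(-(b:ℤ)-1) = 2^(-(b:ℤ)) * 2⁻¹ := by
        rw [zpow_sub₀ (by norm_num : (2:ℝ) ≠ 0), zpow_one]; ring
      rw [h2]; ring
    · have ha : a = b + 2 := by omega
      subst ha
      rw [Finset.Icc_eq_empty (by omega), Finset.sum_empty]
      have hc : (1:ℤ)-((b+2:ℕ):ℤ) = -(((b+1:ℕ):ℤ)) := by push_cast; ring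
      rw [hc, sub_self]
/-- Correctness of Kitaev's classical post-processing: from `1/8`-precise estimates
`β k` of the phases `2^(k-1) φ (mod 1)`, any sequence of bits `x̂` obtained by the
iterative inference rule reconstructs `φ` to precision `2^(-(n+2))`. -/
theorem kitaev_post_processing (n : ℕ) (hn : 1 ≤ n)
    (x : ℕ → ℕ) (hx : ∀ i, x i ≤ 1)
    (φ : ℝ) (hφ : φ = ∑ i ∈ Finset.Icc 1 (n + 2), (x i : ℝ) / 2 ^ i)
    (β : ℕ → ℝ)
    (hβ : ∀ k ∈ Finset.Icc 1 n, distMod1 (2 ^ (k - 1) * φ - β k) < 1 / 8)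
    (x' : ℕ → ℕ) (hx' : ∀ i, x' i ≤ 1)
    -- the last three bits are read off from `β n`:
    (hlast : β n = (x' n : ℝ) / 2 + (x' (n + 1) : ℝ) / 4 + (x' (n + 2) : ℝ) / 8)
    -- for `k = n-1, …, 1`, the bit `x̂ k` is chosen so that
    -- `|0.x̂ₖ x̂ₖ₊₁ x̂ₖ₊₂ - βₖ| (mod 1) < 1/4`:
    (hiter : ∀ k ∈ Finset.Icc 1 (n - 1),
      distMod1 ((x' k : ℝ) / 2 + (x' (k + 1) : ℝ) / 4 + (x' (k + 2) : ℝ) / 8 - β k)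
        < 1 / 4) :
    distMod1 ((∑ i ∈ Finset.Icc 1 (n + 2), (x' i : ℝ) / 2 ^ i) - φ)
      < 2 ^ (-(n + 2) : ℤ) := by
  have h2ne : (2:ℝ) ≠ 0 := by norm_num
  set F : (ℕ → ℕ) → ℕ → ℝ :=
    fun y k => (2:ℝ)^((k:ℤ)-1) * ∑ i ∈ Finset.Icc k (n+2), ((y i : ℝ) * (2:ℝ)^(-(i:ℤ)))
    with hF
  have hF1 : ∀ y : ℕ → ℕ, F y 1 = ∑ i ∈ Finset.Icc 1 (n+2), (y i : ℝ) / 2^i := by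
    intro y
    simp only [hF]
    rw [show ((1:ℕ):ℤ) - 1 = 0 by norm_num, zpow_zero, one_mul]
    refine Finset.sum_congr rfl fun i _ => ?_
    rw [zpow_neg, zpow_natCast]
    ring
  have hsplit : ∀ (y : ℕ → ℕ) (k : ℕ), 1 ≤ k → k ≤ n + 1 →
      F y k = (y k : ℝ)/2 + F y (k+1)/2 := by
    intro y k hk1 hk2
    have hins : Finset.Icc k (n+2) = insert k (Finset.Icc (k+1) (n+2)) := by
      ext i; simp only [Finset.mem_Icc, Finset.mem_insert]; omega
    have hnotmem : k ∉ Finset.Icc (k+1) (n+2) := by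
      simp only [Finset.mem_Icc]; omega
    simp only [hF]
    rw [hins, Finset.sum_insert hnotmem]
    have e1 : (2:ℝ)^((k:ℤ)-1) * ((y k:ℝ) * 2^(-(k:ℤ))) = (y k : ℝ)/2 := by
      rw [mul_comm ((y k : ℝ)) _, ← mul_assoc, ← zpow_add₀ h2ne]
      rw [show (k:ℤ)-1 + -(k:ℤ) = -1 by ring, zpow_neg_one]
      ring
    have e2 : (2:ℝ)^(((k+1:ℕ):ℤ)-1) = 2 * (2:ℝ)^((k:ℤ)-1) := by
      rw [show ((k+1:ℕ):ℤ)-1 = 1 + ((k:ℤ)-1) by push_cast; ring, zpow_add₀ h2ne, zpow_one]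
    rw [mul_add, e1, e2]
    ring
  have hthree : ∀ (y : ℕ → ℕ) (k : ℕ), 1 ≤ k → k ≤ n →
      F y k = ((y k : ℝ)/2 + (y (k+1) : ℝ)/4 + (y (k+2):ℝ)/8)
        + (2:ℝ)^((k:ℤ)-1) * ∑ i ∈ Finset.Icc (k+3) (n+2), ((y i : ℝ) * (2:ℝ)^(-(i:ℤ))) := by
    intro y k hk1 hk2
    simp only [hF]
    have hunion : Finset.Icc k (n+2) = Finset.Icc k (k+2) ∪ Finset.Icc (k+3) (n+2) := by
      ext i; simp only [Finset.mem_Icc, Finset.mem_union]; omega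
    have hdisj : Disjoint (Finset.Icc k (k+2)) (Finset.Icc (k+3) (n+2)) := by
      rw [Finset.disjoint_left]
      intro i hi hi'
      simp only [Finset.mem_Icc] at hi hi'
      omega
    rw [hunion, Finset.sum_union hdisj, mul_add]
    congr 1
    have hset : Finset.Icc k (k+2) = {k, k+1, k+2} := by
      ext i
      simp only [Finset.mem_Icc, Finset.mem_insert, Finset.mem_singleton]
      omega
    have hm1 : k ∉ ({k+1, k+2} : Finset ℕ) := by
      simp only [Finset.mem_insert, Finset.mem_singleton]; omega
    have hm2 : k+1 ∉ ({k+2} : Finset ℕ) := by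
      simp only [Finset.mem_singleton]; omega
    rw [hset, Finset.sum_insert hm1, Finset.sum_insert hm2, Finset.sum_singleton]
    have p0 : (2:ℝ)^((k:ℤ)-1) * 2^(-(k:ℤ)) = 1/2 := by
      rw [← zpow_add₀ h2ne, show (k:ℤ)-1 + -(k:ℤ) = -1 by ring, zpow_neg_one]
      norm_num
    have p1 : (2:ℝ)^((k:ℤ)-1) * 2^(-((k+1:ℕ):ℤ)) = 1/4 := by
      rw [← zpow_add₀ h2ne, show (k:ℤ)-1 + -((k+1:ℕ):ℤ) = -2 by push_cast; ring]
      rw [show (-2:ℤ) = -(2:ℕ) by norm_num, zpow_neg, zpow_natCast]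
      norm_num
    have p2 : (2:ℝ)^((k:ℤ)-1) * 2^(-((k+2:ℕ):ℤ)) = 1/8 := by
      rw [← zpow_add₀ h2ne, show (k:ℤ)-1 + -((k+2:ℕ):ℤ) = -3 by push_cast; ring]
      rw [show (-3:ℤ) = -(3:ℕ) by norm_num, zpow_neg, zpow_natCast]
      norm_num
    linear_combination (y k : ℝ) * p0 + (y (k+1) : ℝ) * p1 + (y (k+2) : ℝ) * p2
  have hβF : ∀ k : ℕ, 1 ≤ k → k ≤ n → distMod1 (F x k - β k) < 1/8 := by
    intro k hk1 hk2
    have hsp : Finset.Icc 1 (n+2) = Finset.Icc 1 (k-1) ∪ Finset.Icc k (n+2) := by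
      ext i; simp only [Finset.mem_Icc, Finset.mem_union]; omega
    have hdisj : Disjoint (Finset.Icc 1 (k-1)) (Finset.Icc k (n+2)) := by
      rw [Finset.disjoint_left]
      intro i hi hi'
      simp only [Finset.mem_Icc] at hi hi'
      omega
    have hphik : (2:ℝ)^(k-1) * φ
        = ((∑ i ∈ Finset.Icc 1 (k-1), (x i : ℤ) * 2^(k-1-i) : ℤ) : ℝ) + F x k := by
      have hnatz : (2:ℝ)^(k-1 : ℕ) = (2:ℝ)^((k:ℤ)-1) := by
        rw [← zpow_natCast]
        congr 1
        omega
      rw [hφ, hnatz]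
      have hsum : ∑ i ∈ Finset.Icc 1 (n+2), (x i:ℝ)/2^i
          = ∑ i ∈ Finset.Icc 1 (n+2), (x i : ℝ) * 2^(-(i:ℤ)) :=
        Finset.sum_congr rfl fun i _ => by rw [zpow_neg, zpow_natCast]; ring
      rw [hsum, hsp, Finset.sum_union hdisj, mul_add]
      simp only [hF]
      congr 1
      rw [Finset.mul_sum]
      push_cast
      refine Finset.sum_congr rfl fun i hi => ?_
      simp only [Finset.mem_Icc] at hi
      have hz : (2:ℝ)^((k-1-i:ℕ)) = 2^((k:ℤ)-1-(i:ℤ)) := by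
        rw [← zpow_natCast]
        congr 1
        omega
      have h2 : (2:ℝ)^((k:ℤ)-1) * 2^(-(i:ℤ)) = 2^((k:ℤ)-1-(i:ℤ)) := by
        rw [← zpow_add₀ h2ne, show (k:ℤ)-1 + -(i:ℤ) = (k:ℤ)-1-(i:ℤ) from by ring]
      rw [hz]
      linear_combination (x i : ℝ) * h2
    have hb := hβ k (by simp only [Finset.mem_Icc]; omega)
    have key : F x k - β k
        = (2^(k-1) * φ - β k) + ((-(∑ i ∈ Finset.Icc 1 (k-1), (x i : ℤ) * 2^(k-1-i)) : ℤ) : ℝ) := by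
      push_cast
      push_cast at hphik
      linarith [hphik]
    rw [key, dm1_add_int]
    exact hb
  have htail : ∀ k : ℕ, 1 ≤ k → k ≤ n →
      |F x' k - ((x' k:ℝ)/2 + (x' (k+1):ℝ)/4 + (x' (k+2):ℝ)/8)|
        ≤ 1/8 - 2^((k:ℤ)-(n:ℤ)-3) := by
    intro k hk1 hk2
    rw [hthree x' k hk1 hk2, add_sub_cancel_left]
    have hS : ∀ i ∈ Finset.Icc (k+3) (n+2), (x' i : ℝ) * 2^(-(i:ℤ)) ≤ 2^(-(i:ℤ)) := by
      intro i _
      have : (x' i : ℝ) ≤ 1 := by exact_mod_cast hx' i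
      nlinarith [zpow_pos (show (0:ℝ) < 2 by norm_num) (-(i:ℤ))]
    have hS0 : ∀ i ∈ Finset.Icc (k+3) (n+2), (0:ℝ) ≤ (x' i : ℝ) * 2^(-(i:ℤ)) := by
      intro i _
      positivity
    have hpos : (0:ℝ) < 2^((k:ℤ)-1) := zpow_pos (by norm_num) _
    rw [abs_of_nonneg (by positivity)]
    have hb : ∑ i ∈ Finset.Icc (k+3) (n+2), (x' i : ℝ) * 2^(-(i:ℤ))
        ≤ 2^(1-((k+3:ℕ):ℤ)) - 2^(-((n+2:ℕ):ℤ)) := by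
      rw [← geo_sum (k+3) (n+2) (by omega)]
      exact Finset.sum_le_sum hS
    have e1 : (2:ℝ)^((k:ℤ)-1) * 2^(1-((k+3:ℕ):ℤ)) = 1/8 := by
      rw [← zpow_add₀ h2ne, show (k:ℤ)-1 + (1-((k+3:ℕ):ℤ)) = -3 by push_cast; ring]
      rw [show (-3:ℤ) = -(3:ℕ) by norm_num, zpow_neg, zpow_natCast]
      norm_num
    have e2 : (2:ℝ)^((k:ℤ)-1) * 2^(-((n+2:ℕ):ℤ)) = 2^((k:ℤ)-(n:ℤ)-3) := by
      rw [← zpow_add₀ h2ne]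
      congr 1
      push_cast
      ring
    calc (2:ℝ)^((k:ℤ)-1) * ∑ i ∈ Finset.Icc (k+3) (n+2), (x' i : ℝ) * 2^(-(i:ℤ))
        ≤ 2^((k:ℤ)-1) * (2^(1-((k+3:ℕ):ℤ)) - 2^(-((n+2:ℕ):ℤ))) :=
          mul_le_mul_of_nonneg_left hb hpos.le
      _ = 1/8 - 2^((k:ℤ)-(n:ℤ)-3) := by rw [mul_sub, e1, e2]
  have hFn' : F x' n = β n := by
    rw [hthree x' n hn le_rfl, hlast, Finset.Icc_eq_empty (by omega), Finset.sum_empty,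
      mul_zero, add_zero]
  have main : ∀ d k : ℕ, k + d = n → 1 ≤ k →
      distMod1 (F x' k - F x k) < 2^((k:ℤ)-(n:ℤ)-3) := by
    intro d
    induction d with
    | zero =>
      intro k hk hk1
      have hkn : k = n := by omega
      subst hkn
      rw [show F x' k - F x k = -(F x k - β k) by rw [hFn']; ring, dm1_neg]
      have h8 := hβF k hk1 le_rfl
      have e3 : (2:ℝ)^((k:ℤ)-(k:ℤ)-3) = 1/8 := by
        rw [show (k:ℤ)-(k:ℤ)-3 = -(3:ℕ) by push_cast; ring, zpow_neg, zpow_natCast]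
        norm_num
      rw [e3]
      exact h8
    | succ d ih =>
      intro k hk hk1
      have ihk := ih (k+1) (by omega) (by omega)
      set δ := F x' (k+1) - F x (k+1) with hδ
      set m := round δ with hm
      set t := δ - (m:ℝ) with ht
      have habs : |t| ≤ 1/2 := by rw [ht, hm]; exact abs_sub_round δ
      have htlt : |t| < 2 * 2^((k:ℤ)-(n:ℤ)-3) := by
        have hexp : (2:ℝ)^(((k+1:ℕ):ℤ)-(n:ℤ)-3) = 2 * 2^((k:ℤ)-(n:ℤ)-3) := by
          rw [show ((k+1:ℕ):ℤ)-(n:ℤ)-3 = 1 + ((k:ℤ)-(n:ℤ)-3) by push_cast; ring,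
            zpow_add₀ h2ne, zpow_one]
        rw [← hexp]
        simpa [distMod1, ht, hm] using ihk
      have εpos : (0:ℝ) < 2^((k:ℤ)-(n:ℤ)-3) := zpow_pos (by norm_num) _
      have hub : distMod1 (F x' k - F x k) < 1/2 - 2^((k:ℤ)-(n:ℤ)-3) := by
        have h1 := htail k hk1 (by omega)
        have h2 := hiter k (by simp only [Finset.mem_Icc]; omega)
        have h3 := hβF k hk1 (by omega)
        set γ := (x' k:ℝ)/2 + (x' (k+1):ℝ)/4 + (x' (k+2):ℝ)/8 with hγ
        have b1 : distMod1 (F x' k - γ) ≤ 1/8 - 2^((k:ℤ)-(n:ℤ)-3) := (dm1_le_abs _).trans h1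
        have b3 : distMod1 (β k - F x k) < 1/8 := by
          rw [show β k - F x k = -(F x k - β k) by ring, dm1_neg]
          exact h3
        have hdec : F x' k - F x k = (F x' k - γ) + ((γ - β k) + (β k - F x k)) := by ring
        have tcal : distMod1 (F x' k - F x k)
            ≤ distMod1 (F x' k - γ) + (distMod1 (γ - β k) + distMod1 (β k - F x k)) := by
          rw [hdec]
          exact (dm1_triangle _ _).trans
            (by linarith [dm1_triangle (γ - β k) (β k - F x k)])
        linarith
      have hsplit' : F x' k - F x k = (((x' k : ℤ) - (x k : ℤ) + m : ℤ):ℝ)/2 + t/2 := by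
        rw [hsplit x' k hk1 (by omega), hsplit x k hk1 (by omega), ht, hδ]
        push_cast
        ring
      have habs2 : |t/2| = |t|/2 := by
        rw [abs_div]
        norm_num
      rcases Int.even_or_odd ((x' k : ℤ) - (x k : ℤ) + m) with ⟨j, hj⟩ | ⟨j, hj⟩
      · have heq : F x' k - F x k = t/2 + (j:ℝ) := by
          rw [hsplit', hj]
          push_cast
          ring
        rw [show ((j:ℝ)) = ((j:ℤ):ℝ) by norm_cast] at heq
        rw [heq, dm1_add_int]
        calc distMod1 (t/2) ≤ |t/2| := dm1_le_abs _
          _ = |t|/2 := habs2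
          _ < 2^((k:ℤ)-(n:ℤ)-3) := by linarith
      · exfalso
        have heq : F x' k - F x k = (j:ℝ) + 1/2 + t/2 := by
          rw [hsplit', hj]
          push_cast
          ring
        have hlow := dm1_half_lower j (t/2)
        rw [← heq] at hlow
        rw [habs2] at hlow
        linarith
  have hmain := main (n-1) 1 (by omega) le_rfl
  rw [hF1 x', hF1 x] at hmain
  rw [hφ]
  have e : ((1:ℕ):ℤ)-(n:ℤ)-3 = -((n:ℤ)+2) := by push_cast; ring
  rw [e] at hmain
  exact hmain
end

section
/- If s and t are real numbers with |s - sin(2πφ)| < δ and |t - cos(2πφ)| < δ for δ = (1/4)√(1 - 1/√2), and φ ∈ [0,1) with cos(2πφ) ≠ 0, t ≠ 0, and (s,t) lies in the same half-plane sign configuration as (sin 2πφ, cos 2πφ), then |(1/(2π)) arctan(s/t) - φ| mod 1 < 1/16 (after the appropriate branch correction determined by the signs of s and t). -/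
private lemma distMod1_lt_of_int (z : ℝ) (m : ℤ) (h : |z - m| < 1/16) :
    distMod1 z < 1/16 := by
  have habs := abs_lt.mp h
  have hr : round z = m := by
    rw [round_eq, Int.floor_eq_iff]
    constructor
    · push_cast; linarith [habs.1]
    · push_cast; linarith [habs.2]
  rw [distMod1, hr]
  exact h

private lemma small_angle (x : ℝ) (h1 : -Real.pi < x) (h2 : x < Real.pi)
    (hc : 0 < Real.cos x) (hsin : |Real.sin x| < Real.sin (Real.pi/8)) :
    |x| < Real.pi/8 := by
  have hπ := Real.pi_pos
  have hx2 : |x| < Real.pi/2 := by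
    by_contra h
    push_neg at h
    have hle : |x| ≤ Real.pi + Real.pi/2 := by
      rcases abs_lt.mpr ⟨h1, h2⟩ |>.le with _
      have := abs_lt.mpr ⟨h1, h2⟩
      linarith [this.le]
    have hnp : Real.cos |x| ≤ 0 := Real.cos_nonpos_of_pi_div_two_le_of_le h hle
    rw [Real.cos_abs] at hnp
    linarith
  by_contra h
  push_neg at h
  have habs : |x| ≤ Real.pi/2 := hx2.le
  have hmono : Real.sin (Real.pi/8) ≤ Real.sin |x| := by
    rcases eq_or_lt_of_le h with he | hl
    · rw [← he]
    · exact (Real.strictMonoOn_sin ⟨by linarith, by linarith⟩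
        ⟨by linarith [abs_nonneg x], habs⟩ hl).le
  have hsabs : Real.sin |x| = |Real.sin x| := by
    rcases le_or_gt 0 x with hx | hx
    · rw [abs_of_nonneg hx, abs_of_nonneg
        (Real.sin_nonneg_of_nonneg_of_le_pi hx (by linarith))]
    · rw [abs_of_neg hx, Real.sin_neg, abs_of_nonpos
        (Real.sin_nonpos_of_nonpos_of_neg_pi_le hx.le (by linarith))]
  rw [hsabs] at hmono
  linarith

set_option maxHeartbeats 4000000 in
/-- Robustness of phase recovery via the inverse tangent: estimates of `sin (2πφ)`
and `cos (2πφ)` to within `δ = (1/4)√(1 - 1/√2)` determine `φ` modulo 1 to precision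
`1/16`, after the branch correction determined by the signs of the estimates. -/
theorem arctan_phase_recovery (φ s t : ℝ) (hφ : φ ∈ Set.Ico (0 : ℝ) 1)
    (hs : |s - Real.sin (2 * Real.pi * φ)| < (1/4) * Real.sqrt (1 - 1 / Real.sqrt 2))
    (ht : |t - Real.cos (2 * Real.pi * φ)| < (1/4) * Real.sqrt (1 - 1 / Real.sqrt 2))
    (hcos : Real.cos (2 * Real.pi * φ) ≠ 0) (ht0 : t ≠ 0)
    (hsignt : t * Real.cos (2 * Real.pi * φ) > 0)
    (hsigns : s * Real.sin (2 * Real.pi * φ) ≥ 0) :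
    distMod1 ((1 / (2 * Real.pi)) * Real.arctan (s / t) +
        (if t < 0 then (1:ℝ)/2 else 0) - φ) < 1 / 16 := by
  obtain ⟨hφ0, hφ1⟩ := hφ
  have hπ := Real.pi_pos
  set θ := 2 * Real.pi * φ with hθdef
  set C := Real.cos θ with hC
  set S := Real.sin θ with hS
  set δ := (1/4) * Real.sqrt (1 - 1 / Real.sqrt 2) with hδdef
  have hθ0 : 0 ≤ θ := by rw [hθdef]; positivity
  have hθhi : θ < 2*Real.pi := by
    rw [hθdef]
    have := mul_lt_mul_of_pos_left hφ1 (by linarith : (0:ℝ) < 2*Real.pi)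
    linarith
  have hpyth : S^2 + C^2 = 1 := Real.sin_sq_add_cos_sq θ
  -- numeric bounds on sqrt 2
  have hs2 : Real.sqrt 2 ^ 2 = 2 := Real.sq_sqrt (by norm_num)
  have hs2n : 0 ≤ Real.sqrt 2 := Real.sqrt_nonneg 2
  have h2a : (1.414:ℝ) < Real.sqrt 2 := by
    by_contra hcon
    push_neg at hcon
    have h := pow_le_pow_left₀ hs2n hcon 2
    rw [hs2] at h
    norm_num at h
  have h2b : Real.sqrt 2 < 1.4143 := by
    by_contra hcon
    push_neg at hcon
    have h := pow_le_pow_left₀ (by norm_num : (0:ℝ) ≤ 1.4143) hcon 2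
    rw [hs2] at h
    norm_num at h
  have hone : (0:ℝ) ≤ 1 - 1 / Real.sqrt 2 := by
    have : 1 / Real.sqrt 2 ≤ 1 := by
      rw [div_le_one (by linarith)]; linarith
    linarith
  have hδsq : δ^2 = (1 - 1 / Real.sqrt 2)/16 := by
    rw [hδdef, mul_pow, Real.sq_sqrt hone]; ring
  have hinv : (0.70706:ℝ) < 1 / Real.sqrt 2 := by
    rw [lt_div_iff₀ (by linarith)]; linarith
  have hδ2 : δ^2 < 0.01831 := by rw [hδsq]; linarith
  clear_value δ
  -- error terms
  set e1 := s - S with he1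
  set e2 := t - C with he2
  clear_value θ C S e1 e2
  have he1sq : e1^2 < δ^2 := by
    have h1 := mul_self_lt_mul_self (abs_nonneg e1) hs
    rw [abs_mul_abs_self] at h1
    linarith [sq_nonneg e1, (sq e1).symm ▸ h1, (by ring : e1*e1 = e1^2), (by ring : δ*δ = δ^2)]
  have he2sq : e2^2 < δ^2 := by
    have h1 := mul_self_lt_mul_self (abs_nonneg e2) ht
    rw [abs_mul_abs_self] at h1
    linarith [(by ring : e2*e2 = e2^2), (by ring : δ*δ = δ^2)]
  set A := e2*C + e1*S with hA
  set B := e1*C - e2*S with hB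
  clear_value A B
  have hAB : A^2 + B^2 = e1^2 + e2^2 := by rw [hA, hB]; linear_combination (e1^2 + e2^2) * hpyth
  have hAbd : A^2 < 0.03663 := by linarith [hAB, sq_nonneg B, he1sq, he2sq, hδ2]
  have hBbd : B^2 < 0.03663 := by linarith [hAB, sq_nonneg A, he1sq, he2sq, hδ2]
  have hAabs : |A| < 0.1914 := by
    rw [abs_lt]
    constructor
    · linarith [hAbd, sq_nonneg (A + 0.1914)]
    · linarith [hAbd, sq_nonneg (A - 0.1914)]
  have hBabs : |B| < 0.1914 := by
    rw [abs_lt]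
    constructor
    · linarith [hBbd, sq_nonneg (B + 0.1914)]
    · linarith [hBbd, sq_nonneg (B - 0.1914)]
  -- r
  have ht2 : 0 < t^2 := by
    have h := pow_pos (abs_pos.mpr ht0) 2
    rwa [sq_abs] at h
  set r := Real.sqrt (t^2 + s^2) with hrdef
  have hr2 : r^2 = t^2 + s^2 := Real.sq_sqrt (by positivity)
  have hrpos : 0 < r := Real.sqrt_pos.mpr (by linarith [ht2, sq_nonneg s])
  clear_value r
  have hts : t = C + e2 := by rw [he2]; ring
  have hss : s = S + e1 := by rw [he1]; ring
  have hr2' : r^2 = 1 + 2*A + e1^2 + e2^2 := by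
    rw [hr2, hts, hss, hA]; linear_combination hpyth
  have hr2low : (0.6085:ℝ) < r^2 := by
    have hA1 := abs_lt.mp hAabs
    linarith [hr2', sq_nonneg e1, sq_nonneg e2]
  have hrlow : (0.78:ℝ) < r := by
    by_contra hcon
    push_neg at hcon
    have h1 : r^2 ≤ (0.78:ℝ)^2 := pow_le_pow_left₀ hrpos.le hcon 2
    norm_num at h1
    linarith
  -- sin (π/8) lower bound
  have hsin8 : (0.3826:ℝ) < Real.sin (Real.pi/8) := by
    have h1 : Real.sin (Real.pi/8) ^ 2 = 1/2 - Real.sqrt 2 / 4 := by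
      have := Real.sin_sq_eq_half_sub (Real.pi/8)
      rw [show 2 * (Real.pi/8) = Real.pi/4 by ring, Real.cos_pi_div_four] at this
      rw [this]; ring
    have h2 : 0 ≤ Real.sin (Real.pi/8) :=
      Real.sin_nonneg_of_nonneg_of_le_pi (by linarith) (by linarith)
    by_contra hcon
    push_neg at hcon
    have h3 : Real.sin (Real.pi/8)^2 ≤ (0.3826:ℝ)^2 := pow_le_pow_left₀ h2 hcon 2
    rw [h1] at h3
    linarith
  -- trig identities for t C + s S and s C - t S
  have htsum : t*C + s*S = 1 + A := by rw [hts, hss, hA]; linear_combination hpyth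
  have hbsum : s*C - t*S = B := by rw [hts, hss, hB]; ring
  -- key claim
  have key : ∀ x : ℝ, -Real.pi < x → x < Real.pi →
      Real.cos x = (t*C + s*S)/r → Real.sin x = (s*C - t*S)/r →
      |x| < Real.pi/8 := by
    intro x hx1 hx2 hcx hsx
    apply small_angle x hx1 hx2
    · rw [hcx, htsum]
      exact div_pos (by linarith [abs_lt.mp hAabs]) hrpos
    · rw [hsx, hbsum, abs_div, abs_of_pos hrpos, div_lt_iff₀ hrpos]
      have hprod : (0.3826:ℝ) * 0.78 < Real.sin (Real.pi/8) * r :=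
        mul_lt_mul'' hsin8 hrlow (by norm_num) (by norm_num)
      linarith [hBabs]
  -- cos and sin of arctan (s/t)
  have habs_t : 0 < |t| := abs_pos.mpr ht0
  have hone_arg : Real.sqrt (1 + (s/t)^2) = r / |t| := by
    have h1 : 1 + (s/t)^2 = (r/|t|)^2 := by
      rw [div_pow, div_pow, sq_abs, hr2]
      field_simp
    rw [h1]
    exact Real.sqrt_sq (div_nonneg hrpos.le (abs_nonneg t))
  have hca : Real.cos (Real.arctan (s/t)) = |t| / r := by
    rw [Real.cos_arctan, hone_arg, one_div_div]
  have hsa : Real.sin (Real.arctan (s/t)) = s * |t| / (t * r) := by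
    rw [Real.sin_arctan, hone_arg]
    rw [div_div_div_eq]
  have hat1 := Real.neg_pi_div_two_lt_arctan (s/t)
  have hat2 := Real.arctan_lt_pi_div_two (s/t)
  set X := (1 / (2 * Real.pi)) * Real.arctan (s / t) +
        (if t < 0 then (1:ℝ)/2 else 0) - φ with hX
  clear_value X
  rcases ht0.lt_or_gt with hneg | hpos
  · -- t < 0, so C < 0, θ ∈ (π/2, 3π/2), branch +π, m = 0
    have hCneg : C < 0 := by
      by_contra hcon
      push_neg at hcon
      have := mul_nonneg (neg_nonneg.mpr hneg.le) hcon
      linarith [hsignt, (by ring : -t * C = -(t*C))]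
    have hθa : Real.pi/2 < θ := by
      by_contra h
      push_neg at h
      have := Real.cos_nonneg_of_mem_Icc (x := θ) ⟨by linarith, h⟩
      rw [← hC] at this; linarith
    have hθb : θ < 3*Real.pi/2 := by
      by_contra h
      push_neg at h
      have h1 : θ - 2*Real.pi ∈ Set.Icc (-(Real.pi/2)) (Real.pi/2) :=
        ⟨by linarith, by linarith⟩
      have := Real.cos_nonneg_of_mem_Icc h1
      rw [Real.cos_sub_two_pi, ← hC] at this; linarith
    set Δ := Real.arctan (s/t) + Real.pi - θ with hΔ
    have hcΔ : Real.cos Δ = (t*C + s*S)/r := by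
      rw [show Δ = (Real.arctan (s/t) - θ) + Real.pi by rw [hΔ]; ring,
        Real.cos_add_pi, Real.cos_sub, hca, hsa, abs_of_neg hneg, hC, hS]
      field_simp
      ring
    have hsΔ : Real.sin Δ = (s*C - t*S)/r := by
      rw [show Δ = (Real.arctan (s/t) - θ) + Real.pi by rw [hΔ]; ring,
        Real.sin_add_pi, Real.sin_sub, hca, hsa, abs_of_neg hneg, hC, hS]
      field_simp
      ring
    have hsmall := key Δ (by rw [hΔ]; linarith) (by rw [hΔ]; linarith) hcΔ hsΔ
    apply distMod1_lt_of_int _ 0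
    have hXeq : 2*Real.pi*(X - (0:ℤ)) = Δ := by
      rw [hX, if_pos hneg, hΔ, hθdef]
      push_cast
      field_simp
      ring
    have h1 : |2*Real.pi*(X - (0:ℤ))| < Real.pi/8 := by rw [hXeq]; exact hsmall
    rw [abs_mul, abs_of_pos (by linarith : (0:ℝ) < 2*Real.pi)] at h1
    have h2 : |X - ((0:ℤ):ℝ)| * (2*Real.pi) < 1/16 * (2*Real.pi) := by linarith
    exact lt_of_mul_lt_mul_right h2 (by linarith)
  · -- t > 0, so C > 0
    have hCpos : 0 < C := by
      by_contra hcon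
      push_neg at hcon
      have := mul_nonneg hpos.le (neg_nonneg.mpr hcon)
      linarith [hsignt, (by ring : t * -C = -(t*C))]
    have hnlt : ¬ t < 0 := by linarith
    rcases lt_or_ge θ (Real.pi/2) with hθa | hθa
    · -- θ ∈ [0, π/2), m = 0
      set Δ := Real.arctan (s/t) - θ with hΔ
      have hcΔ : Real.cos Δ = (t*C + s*S)/r := by
        rw [hΔ, Real.cos_sub, hca, hsa, abs_of_pos hpos, hC, hS]
        field_simp
        try ring
      have hsΔ : Real.sin Δ = (s*C - t*S)/r := by
        rw [hΔ, Real.sin_sub, hca, hsa, abs_of_pos hpos, hC, hS]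
        field_simp
        try ring
      have hsmall := key Δ (by rw [hΔ]; linarith) (by rw [hΔ]; linarith) hcΔ hsΔ
      apply distMod1_lt_of_int _ 0
      have hXeq : 2*Real.pi*(X - (0:ℤ)) = Δ := by
        rw [hX, if_neg hnlt, hΔ, hθdef]
        push_cast
        field_simp
        try ring
      have h1 : |2*Real.pi*(X - (0:ℤ))| < Real.pi/8 := by rw [hXeq]; exact hsmall
      rw [abs_mul, abs_of_pos (by linarith : (0:ℝ) < 2*Real.pi)] at h1
      have h2 : |X - ((0:ℤ):ℝ)| * (2*Real.pi) < 1/16 * (2*Real.pi) := by linarith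
      exact lt_of_mul_lt_mul_right h2 (by linarith)
    · -- θ > 3π/2, m = -1
      have hθb : 3*Real.pi/2 < θ := by
        rcases lt_or_ge (3*Real.pi/2) θ with h | h
        · exact h
        · exfalso
          have := Real.cos_nonpos_of_pi_div_two_le_of_le hθa (by linarith)
          rw [← hC] at this; linarith
      set Δ := Real.arctan (s/t) - θ + 2*Real.pi with hΔ
      have hcΔ : Real.cos Δ = (t*C + s*S)/r := by
        rw [hΔ, Real.cos_add_two_pi, Real.cos_sub, hca, hsa, abs_of_pos hpos, hC, hS]
        field_simp
        try ring
      have hsΔ : Real.sin Δ = (s*C - t*S)/r := by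
        rw [hΔ, Real.sin_add_two_pi, Real.sin_sub, hca, hsa, abs_of_pos hpos, hC, hS]
        field_simp
        try ring
      have hsmall := key Δ (by rw [hΔ]; linarith) (by rw [hΔ]; linarith) hcΔ hsΔ
      apply distMod1_lt_of_int _ (-1)
      have hXeq : 2*Real.pi*(X - ((-1:ℤ):ℝ)) = Δ := by
        rw [hX, if_neg hnlt, hΔ, hθdef]
        push_cast
        field_simp
        try ring
      have h1 : |2*Real.pi*(X - ((-1:ℤ):ℝ))| < Real.pi/8 := by rw [hXeq]; exact hsmall
      rw [abs_mul, abs_of_pos (by linarith : (0:ℝ) < 2*Real.pi)] at h1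
      have h2 : |X - ((-1:ℤ):ℝ)| * (2*Real.pi) < 1/16 * (2*Real.pi) := by linarith
      exact lt_of_mul_lt_mul_right h2 (by linarith)
end

section
/- For all real x with |x| ≤ 1 - δ where δ = (1/4)√(1 - 1/√2), we have |arctan(x/√(1-x²)) - arctan((x+δ)/(√(1-x²) - δ))| ≤ π/16 whenever √(1-x²) - δ > 0. -/
set_option maxHeartbeats 1000000

open Real

lemma my_arctan_le_self {y : ℝ} (hy : 0 ≤ y) : Real.arctan y ≤ y := by
  rcases lt_or_ge y (Real.pi / 2) with h | h
  · have h1 : y ≤ Real.tan y := Real.le_tan hy h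
    have h2 : Real.arctan y ≤ Real.arctan (Real.tan y) :=
      Real.arctan_strictMono.monotone h1
    rwa [Real.arctan_tan (by linarith [Real.pi_pos]) h] at h2
  · linarith [Real.arctan_lt_pi_div_two y]

lemma my_le_of_sq_le_sq {a k : ℝ} (hk : 0 < k) (h : a ^ 2 ≤ k ^ 2) : a ≤ k := by
  nlinarith [sq_nonneg (a - k)]

lemma my_abs_arctan_le_abs (z : ℝ) : |Real.arctan z| ≤ |z| := by
  rcases le_or_gt 0 z with h | h
  · rw [abs_of_nonneg h, abs_of_nonneg (by simpa using Real.arctan_strictMono.monotone h)]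
    exact my_arctan_le_self h
  · rw [abs_of_neg h, abs_of_neg (by simpa using Real.arctan_strictMono h)]
    have h1 : Real.arctan (-z) ≤ -z := my_arctan_le_self (by linarith)
    rwa [Real.arctan_neg] at h1

theorem arctan_perturbation_bound (x : ℝ)
    (hx : |x| ≤ 1 - (1/4) * Real.sqrt (1 - 1 / Real.sqrt 2))
    (hpos : Real.sqrt (1 - x ^ 2) - (1/4) * Real.sqrt (1 - 1 / Real.sqrt 2) > 0) :
    |Real.arctan (x / Real.sqrt (1 - x ^ 2)) -
        Real.arctan ((x + (1/4) * Real.sqrt (1 - 1 / Real.sqrt 2)) /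
          (Real.sqrt (1 - x ^ 2) - (1/4) * Real.sqrt (1 - 1 / Real.sqrt 2)))| ≤
      Real.pi / 16 := by
  have h2 : Real.sqrt 2 ^ 2 = 2 := Real.sq_sqrt (by norm_num)
  have h2n : (0:ℝ) ≤ Real.sqrt 2 := Real.sqrt_nonneg 2
  have h2lb : Real.sqrt 2 > 1.414 := by nlinarith
  have h2ub : Real.sqrt 2 < 1.41422 := by nlinarith
  have hspos : (0:ℝ) < Real.sqrt 2 := by linarith
  have hslb : (0.7071 : ℝ) ≤ 1 / Real.sqrt 2 := by
    rw [le_div_iff₀ hspos]; nlinarith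
  have hsub : 1 / Real.sqrt 2 ≤ 0.70711 := by
    rw [div_le_iff₀ hspos]; nlinarith
  set δ : ℝ := (1/4) * Real.sqrt (1 - 1 / Real.sqrt 2) with hδdef
  set c : ℝ := Real.sqrt (1 - x ^ 2) with hcdef
  have hδsq : δ ^ 2 = (1 - 1 / Real.sqrt 2) / 16 := by
    rw [hδdef, mul_pow, Real.sq_sqrt (by linarith)]; ring
  have hδpos : 0 < δ := by
    rw [hδdef]
    exact mul_pos (by norm_num) (Real.sqrt_pos.mpr (by linarith))
  have hδub : δ ≤ 0.13533 := by nlinarith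
  have hx2 : x ^ 2 ≤ 1 := by
    have h := abs_le.mp hx
    nlinarith [sq_abs x, abs_nonneg x]
  have hc2 : c ^ 2 = 1 - x ^ 2 := Real.sq_sqrt (by linarith)
  clear_value δ c
  have hcd : (0:ℝ) < c - δ := hpos
  have hcpos : (0:ℝ) < c := by linarith
  have hcx : c - x ≤ 1.41422 := by nlinarith [sq_nonneg (c + x), sq_nonneg (c - x)]
  have h1v : 0 < 1 + δ * (x - c) := by
    rcases le_or_gt (c - x) 0 with h | h
    · nlinarith
    · nlinarith [mul_le_mul hδub hcx h.le (by norm_num : (0:ℝ) ≤ 0.13533)]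
  have hcne : c ≠ 0 := ne_of_gt hcpos
  have hcdne : c - δ ≠ 0 := ne_of_gt hcd
  have hab : 1 + (x / c) * ((x + δ) / (c - δ)) = (1 + δ * (x - c)) / (c * (c - δ)) := by
    field_simp
    linear_combination hc2
  have habpos : 0 < 1 + (x / c) * ((x + δ) / (c - δ)) := by
    rw [hab]; exact div_pos h1v (mul_pos hcpos hcd)
  have hmul : (x / c) * (-((x + δ) / (c - δ))) < 1 := by
    rw [mul_neg]; linarith
  have hkey : Real.arctan (x / c) - Real.arctan ((x + δ) / (c - δ)) =
      Real.arctan (-(δ * (x + c)) / (1 + δ * (x - c))) := by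
    rw [sub_eq_add_neg, ← Real.arctan_neg, Real.arctan_add hmul]
    congr 1
    have hbpos : 0 < 1 - x / c * -((x + δ) / (c - δ)) := by
      rw [mul_neg, sub_neg_eq_add]; exact habpos
    rw [div_eq_div_iff (ne_of_gt hbpos) (ne_of_gt h1v)]
    field_simp
    linear_combination (x * δ + c * δ) * hc2
  rw [hkey]
  refine (my_abs_arctan_le_abs _).trans ?_
  rw [abs_div, abs_of_pos h1v, div_le_iff₀ h1v, abs_neg]
  have hk : Real.pi / 16 > 0.196349 := by linarith [Real.pi_gt_d6]
  have hk2 : Real.pi / 16 < 0.196875 := by linarith [Real.pi_lt_d2]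
  have huv : (x + c) ^ 2 + (x - c) ^ 2 = 2 := by nlinarith
  have hA : 2 * δ ^ 2 * (1 + (Real.pi/16) ^ 2) ≤ (Real.pi/16) ^ 2 := by
    nlinarith [hδsq, hslb, hk, mul_nonneg (by linarith : (0:ℝ) ≤ 1 / Real.sqrt 2 - 0.7071)
      (sq_nonneg (Real.pi/16))]
  have huvd : δ ^ 2 * (x + c) ^ 2 + δ ^ 2 * (x - c) ^ 2 = 2 * δ ^ 2 := by
    linear_combination δ ^ 2 * huv
  have huvd2 : (Real.pi/16) ^ 2 * (δ ^ 2 * (x + c) ^ 2) + (Real.pi/16) ^ 2 * (δ ^ 2 * (x - c) ^ 2)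
      = (Real.pi/16) ^ 2 * (2 * δ ^ 2) := by
    linear_combination (Real.pi/16) ^ 2 * huv * δ ^ 2
  rcases abs_cases (δ * (x + c)) with ⟨he, _⟩ | ⟨he, _⟩ <;> rw [he]
  · have hid : (δ * ((x + c) - (Real.pi/16) * (x - c))) ^ 2
        + (δ * ((Real.pi/16) * (x + c) + (x - c))) ^ 2
        = δ ^ 2 * (x + c) ^ 2 + δ ^ 2 * (x - c) ^ 2
          + (Real.pi/16) ^ 2 * (δ ^ 2 * (x + c) ^ 2)
          + (Real.pi/16) ^ 2 * (δ ^ 2 * (x - c) ^ 2) := by ring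
    have hsq : (δ * ((x + c) - (Real.pi/16) * (x - c))) ^ 2 ≤ (Real.pi/16) ^ 2 := by
      linarith [hid, sq_nonneg (δ * ((Real.pi/16) * (x + c) + (x - c))), huvd, huvd2, hA]
    linarith [my_le_of_sq_le_sq (by linarith : (0:ℝ) < Real.pi/16) hsq]
  · have hid : (δ * (-(x + c) - (Real.pi/16) * (x - c))) ^ 2
        + (δ * ((Real.pi/16) * (x + c) - (x - c))) ^ 2
        = δ ^ 2 * (x + c) ^ 2 + δ ^ 2 * (x - c) ^ 2
          + (Real.pi/16) ^ 2 * (δ ^ 2 * (x + c) ^ 2)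
          + (Real.pi/16) ^ 2 * (δ ^ 2 * (x - c) ^ 2) := by ring
    have hsq : (δ * (-(x + c) - (Real.pi/16) * (x - c))) ^ 2 ≤ (Real.pi/16) ^ 2 := by
      linarith [hid, sq_nonneg (δ * ((Real.pi/16) * (x + c) - (x - c))), huvd, huvd2, hA]
    linarith [my_le_of_sq_le_sq (by linarith : (0:ℝ) < Real.pi/16) hsq]
end
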